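/- Let X be a pseudometric space, d ∈ X a depot, θ : ℝ → ℝ monotone with θ(0) ≥ 0, and let L be a finite list of pairs (cᵢ, qᵢ) of customer locations cᵢ ∈ X and nonnegative demands qᵢ ≥ 0. Then for every sublist L′ of L (a subsequence, i.e., the customers of L′ appear in L in the same relative order), the trip energy of L′ is at most the trip energy of L. In particular, if serving the customers of L in this order is feasible with battery capacity M (trip energy of L ≤ M), then serving the customers of any sublist in the induced order is also feasible. -/

import Mathlib

/-- The energy of a delivery trip that starts at the depot `d` at location `prev`,
serves the listed customers in order (each list entry is a pair
(location, demand weight)), and returns empty to the depot.  Each leg costs the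
travel distance times `θ` evaluated at the total weight of the not-yet-delivered
parcels; the return leg is flown empty. -/
noncomputable def tripEnergyFrom {X : Type*} [PseudoMetricSpace X]
    (θ : ℝ → ℝ) (d : X) : X → List (X × ℝ) → ℝ
  | prev, [] => dist prev d * θ 0
  | prev, p :: rest =>
      dist prev p.1 * θ (p.2 + (rest.map Prod.snd).sum) + tripEnergyFrom θ d p.1 rest

lemma weight_nonneg {X : Type*} (M : List (X × ℝ)) (h : ∀ p ∈ M, 0 ≤ p.2) :
    0 ≤ (M.map Prod.snd).sum := by
  apply List.sum_nonneg
  intro x hx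
  obtain ⟨p, hp, rfl⟩ := List.mem_map.1 hx
  exact h p hp

/-- Skipping a forced first stop `a` (with residual weight bound `w`) can only cost more. -/
lemma skip_le {X : Type*} [PseudoMetricSpace X] (θ : ℝ → ℝ) (hθ : Monotone θ) (hθ0 : 0 ≤ θ 0)
    (d : X) (M : List (X × ℝ)) (hM : ∀ p ∈ M, 0 ≤ p.2) (prev a : X) (w : ℝ)
    (hw : (M.map Prod.snd).sum ≤ w) :
    tripEnergyFrom θ d prev M ≤ dist prev a * θ w + tripEnergyFrom θ d a M := by
  have hw0 : 0 ≤ (M.map Prod.snd).sum := weight_nonneg M hM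
  have hθw : θ 0 ≤ θ w := hθ (hw0.trans hw)
  cases M with
  | nil =>
      simp only [tripEnergyFrom]
      calc dist prev d * θ 0 ≤ (dist prev a + dist a d) * θ 0 := by
            exact mul_le_mul_of_nonneg_right (dist_triangle prev a d) hθ0
        _ = dist prev a * θ 0 + dist a d * θ 0 := by ring
        _ ≤ dist prev a * θ w + dist a d * θ 0 :=
            add_le_add_left (mul_le_mul_of_nonneg_left hθw dist_nonneg) _
  | cons p rest =>
      simp only [tripEnergyFrom]
      have hWn : 0 ≤ p.2 + (rest.map Prod.snd).sum := by
        simpa using hw0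
      have hθW0 : (0:ℝ) ≤ θ (p.2 + (rest.map Prod.snd).sum) := hθ0.trans (hθ hWn)
      have hWw : θ (p.2 + (rest.map Prod.snd).sum) ≤ θ w := hθ (by simpa using hw)
      calc dist prev p.1 * θ (p.2 + (rest.map Prod.snd).sum) + tripEnergyFrom θ d p.1 rest
          ≤ (dist prev a + dist a p.1) * θ (p.2 + (rest.map Prod.snd).sum)
              + tripEnergyFrom θ d p.1 rest :=
            add_le_add_left (mul_le_mul_of_nonneg_right (dist_triangle prev a p.1) hθW0) _
        _ = dist prev a * θ (p.2 + (rest.map Prod.snd).sum)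
              + (dist a p.1 * θ (p.2 + (rest.map Prod.snd).sum)
                + tripEnergyFrom θ d p.1 rest) := by ring
        _ ≤ dist prev a * θ w + (dist a p.1 * θ (p.2 + (rest.map Prod.snd).sum)
                + tripEnergyFrom θ d p.1 rest) :=
            add_le_add_left (mul_le_mul_of_nonneg_left hWw dist_nonneg) _

lemma sublist_energy_le {X : Type*} [PseudoMetricSpace X] (θ : ℝ → ℝ) (hθ : Monotone θ)
    (hθ0 : 0 ≤ θ 0) (d : X) {L L' : List (X × ℝ)} (hsub : L'.Sublist L)
    (hq : ∀ p ∈ L, 0 ≤ p.2) :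
    ∀ prev : X, tripEnergyFrom θ d prev L' ≤ tripEnergyFrom θ d prev L := by
  induction hsub with
  | slnil => intro prev; exact le_refl _
  | @cons l₁ l₂ a h ih =>
      intro prev
      have hq₂ : ∀ p ∈ l₂, 0 ≤ p.2 := fun p hp => hq p (List.mem_cons_of_mem a hp)
      have hq₁ : ∀ p ∈ l₁, 0 ≤ p.2 := fun p hp => hq₂ p (h.mem hp)
      have hsum : (l₁.map Prod.snd).sum ≤ a.2 + (l₂.map Prod.snd).sum := by
        have : (l₁.map Prod.snd).sum ≤ (l₂.map Prod.snd).sum := by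
          apply List.Sublist.sum_le_sum (h.map Prod.snd)
          intro x hx
          obtain ⟨p, hp, rfl⟩ := List.mem_map.1 hx
          exact hq₂ p hp
        linarith [hq a List.mem_cons_self]
      calc tripEnergyFrom θ d prev l₁
          ≤ dist prev a.1 * θ (a.2 + (l₂.map Prod.snd).sum) + tripEnergyFrom θ d a.1 l₁ :=
            skip_le θ hθ hθ0 d l₁ hq₁ prev a.1 _ hsum
        _ ≤ dist prev a.1 * θ (a.2 + (l₂.map Prod.snd).sum) + tripEnergyFrom θ d a.1 l₂ :=
            add_le_add_right (ih hq₂ a.1) _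
        _ = tripEnergyFrom θ d prev (a :: l₂) := rfl
  | @cons_cons l₁ l₂ a h ih =>
      intro prev
      have hq₂ : ∀ p ∈ l₂, 0 ≤ p.2 := fun p hp => hq p (List.mem_cons_of_mem a hp)
      have hq₁ : ∀ p ∈ l₁, 0 ≤ p.2 := fun p hp => hq₂ p (h.mem hp)
      have hsum : (l₁.map Prod.snd).sum ≤ (l₂.map Prod.snd).sum := by
        apply List.Sublist.sum_le_sum (h.map Prod.snd)
        intro x hx
        obtain ⟨p, hp, rfl⟩ := List.mem_map.1 hx
        exact hq₂ p hp
      simp only [tripEnergyFrom]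
      have h1 : θ (a.2 + (l₁.map Prod.snd).sum) ≤ θ (a.2 + (l₂.map Prod.snd).sum) :=
        hθ (by linarith)
      exact add_le_add (mul_le_mul_of_nonneg_left h1 dist_nonneg)
        (ih (fun p hp => hq p (List.mem_cons_of_mem a hp)) a.1)

/-- Condition B of Appendix B: with metric travel times and the multiplicative
energy model `F(w, t) = t · θ(w)` (`θ` monotone, `θ 0 ≥ 0`), the trip energy of any
sublist (subsequence) `L'` of `L` is at most the trip energy of `L`; in particular,
if serving `L` is feasible with battery capacity `M`, so is serving any sublist. -/
theorem stmt_2 {X : Type*} [PseudoMetricSpace X] (d : X)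
    (θ : ℝ → ℝ) (hθ : Monotone θ) (hθ0 : 0 ≤ θ 0)
    (L L' : List (X × ℝ)) (hq : ∀ p ∈ L, 0 ≤ p.2) (hsub : L'.Sublist L) :
    tripEnergyFrom θ d d L' ≤ tripEnergyFrom θ d d L ∧
      ∀ M : ℝ, tripEnergyFrom θ d d L ≤ M → tripEnergyFrom θ d d L' ≤ M := by
  have h := sublist_energy_le θ hθ hθ0 d hsub hq d
  exact ⟨h, fun M hM => h.trans hM⟩
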